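/- arXiv:1106.1056 — 2 statements merged into one kernel-verified Lean document; each statement's English description precedes it below -/
import Mathlib

section
/- Let N_Y be a random d×d symmetric matrix (measurable function of a random variable Y) with E‖N_Y‖ < ∞, satisfying: for every nonzero η ∈ R^d, P(η^T N_Y η = 0) < 1. Let Ψ be a countable family of bounded measurable functions whose linear span is dense in L¹(E[‖N_Y‖ | Y = y] P_Y(dy))-weighted sense such that for every nonzero η there is a finite linear combination ψ of elements of Ψ with η^T E[N_Y ψ(Y)] ≠ 0. Then there exists a finite linear combination ψ of elements of Ψ such that the matrix E[N_Y ψ(Y)] is invertible. -/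
open MeasureTheory Matrix Module

theorem core_invertible {d : ℕ} (W : Submodule ℝ (Matrix (Fin d) (Fin d) ℝ))
    (hsymm : ∀ M ∈ W, M.IsSymm)
    (hiso : ∀ η : Fin d → ℝ, η ≠ 0 → ∃ M ∈ W, η ⬝ᵥ M.mulVec η ≠ 0) :
    ∃ M ∈ W, M.det ≠ 0 := by
  by_contra hcon
  push_neg at hcon
  -- maximal rank element
  set R : Set ℕ := {n | ∃ M ∈ W, M.rank = n} with hR
  have hR0 : (0 : ℕ) ∈ R := ⟨0, W.zero_mem, Matrix.rank_zero⟩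
  have hRbdd : BddAbove R := by
    refine ⟨d, fun n hn => ?_⟩
    obtain ⟨M, _, rfl⟩ := hn
    simpa using M.rank_le_card_width
  obtain ⟨M, hMW, hMr⟩ : ∃ M ∈ W, M.rank = sSup R := Nat.sSup_mem ⟨0, hR0⟩ hRbdd
  set r := sSup R with hrdef
  have hmax : ∀ A ∈ W, A.rank ≤ r := fun A hA => le_csSup hRbdd ⟨A, hA, rfl⟩
  -- kernel vector
  obtain ⟨x, hx0, hxK⟩ : ∃ v ≠ 0, M.mulVec v = 0 :=
    (Matrix.exists_mulVec_eq_zero_iff).2 (hcon M hMW)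
  obtain ⟨A, hAW, hc⟩ := hiso x hx0
  -- complement of kernel
  set K : Submodule ℝ (Fin d → ℝ) := LinearMap.ker M.mulVecLin with hKdef
  obtain ⟨U, hU⟩ := K.exists_isCompl
  have hfinU : finrank ℝ U = r := by
    have h1 : finrank ℝ (LinearMap.range M.mulVecLin) + finrank ℝ K =
        finrank ℝ (Fin d → ℝ) := LinearMap.finrank_range_add_finrank_ker _
    have h2 : finrank ℝ K + finrank ℝ U = finrank ℝ (Fin d → ℝ) :=
      Submodule.finrank_add_eq_of_isCompl hU
    have : M.rank = finrank ℝ (LinearMap.range M.mulVecLin) := rfl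
    omega
  let b : Basis (Fin r) ℝ U := finBasisOfFinrankEq ℝ U hfinU
  set q : Fin r → (Fin d → ℝ) := fun j => (b j : Fin d → ℝ) with hq
  set P : Matrix (Fin d) (Fin r ⊕ Unit) ℝ :=
    Matrix.of fun i k => Sum.elim (fun j => q j i) (fun _ => x i) k with hP
  have dot_sum_right : ∀ (c : Fin r → ℝ) (y : Fin r → Fin d → ℝ) (z : Fin d → ℝ),
      z ⬝ᵥ (∑ l, c l • y l) = ∑ l, c l * (y l ⬝ᵥ z) := by
    intro c y z
    simp only [dotProduct, Finset.mul_sum, Finset.sum_apply, Pi.smul_apply, smul_eq_mul]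
    rw [Finset.sum_comm]
    apply Finset.sum_congr rfl; intros; apply Finset.sum_congr rfl; intros; ring
  have dot_sum_left : ∀ (c : Fin r → ℝ) (y : Fin r → Fin d → ℝ) (z : Fin d → ℝ),
      (∑ l, c l • y l) ⬝ᵥ z = ∑ l, c l * (y l ⬝ᵥ z) := by
    intro c y z
    simp only [dotProduct, Finset.mul_sum, Finset.sum_apply, Pi.smul_apply, smul_eq_mul,
      Finset.sum_mul]
    rw [Finset.sum_comm]
    apply Finset.sum_congr rfl; intros; apply Finset.sum_congr rfl; intros; ring
  have entry : ∀ (B : Matrix (Fin d) (Fin d) ℝ) (k l),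
      (Pᵀ * B * P) k l = (fun i => P i k) ⬝ᵥ B.mulVec (fun i => P i l) := by
    intro B k l
    simp only [Matrix.mul_apply, Matrix.transpose_apply, Matrix.mulVec, dotProduct,
      Finset.sum_mul, Finset.mul_sum]
    rw [Finset.sum_comm]
    simp [mul_assoc]
  -- symmetry dot product lemma
  have hMsymm : Mᵀ = M := hsymm M hMW
  have hdotM : ∀ v w : Fin d → ℝ, v ⬝ᵥ M.mulVec w = (M.mulVec v) ⬝ᵥ w := by
    intro v w
    rw [Matrix.dotProduct_mulVec, ← Matrix.mulVec_transpose, hMsymm]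
  set C : Matrix (Fin r) (Fin r) ℝ := Matrix.of fun k l => q k ⬝ᵥ M.mulVec (q l) with hC
  -- C is invertible
  have hCdet : C.det ≠ 0 := by
    intro hdet
    obtain ⟨v, hv0, hvC⟩ := (Matrix.exists_mulVec_eq_zero_iff).2 hdet
    set uU : U := ∑ l, v l • b l with huU
    set u : Fin d → ℝ := (uU : Fin d → ℝ) with hu
    have huq : u = ∑ l, v l • q l := by
      simp [hu, huU, hq]
    have huU0 : uU ≠ 0 := by
      intro h0
      apply hv0
      have hli := b.linearIndependent
      rw [Fintype.linearIndependent_iff] at hli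
      have h0' : (∑ l, v l • b l) = 0 := by rw [← huU]; exact h0
      funext l
      exact hli v h0' l
    set w : Fin d → ℝ := M.mulVec u with hw
    have hw0 : w ≠ 0 := by
      intro h0
      have huK : u ∈ K := by
        simp only [hKdef, LinearMap.mem_ker, Matrix.mulVecLin_apply]
        exact h0
      have huU' : u ∈ U := uU.2
      have : u ∈ K ⊓ U := ⟨huK, huU'⟩
      rw [hU.inf_eq_bot] at this
      have hu0 : (uU : Fin d → ℝ) = 0 := by rw [← hu]; simpa using this
      exact huU0 (ZeroMemClass.coe_eq_zero.1 hu0)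
    -- w is orthogonal to the q's
    have hmulsum : M.mulVec u = ∑ l, v l • M.mulVec (q l) := by
      rw [huq, ← Matrix.mulVecLin_apply, map_sum]
      refine Finset.sum_congr rfl fun l _ => ?_
      rw [LinearMap.map_smul, Matrix.mulVecLin_apply]
    have hqw : ∀ k, q k ⬝ᵥ w = 0 := by
      intro k
      have hck : ∑ l, C k l * v l = 0 := by
        simpa [Matrix.mulVec, dotProduct] using congrFun hvC k
      rw [hw, hmulsum, dot_sum_right, ← hck]
      apply Finset.sum_congr rfl; intro l _
      simp only [hC, Matrix.of_apply]
      rw [dotProduct_comm (q k)]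
      ring
    -- w orthogonal to K
    have hKw : ∀ z ∈ K, z ⬝ᵥ w = 0 := by
      intro z hz
      have hz' : M.mulVec z = 0 := by
        simpa [hKdef, Matrix.mulVecLin_apply] using hz
      rw [hw, hdotM z u, hz', zero_dotProduct]
    -- w orthogonal to U
    have hUw : ∀ z ∈ U, z ⬝ᵥ w = 0 := by
      intro z hz
      have : (⟨z, hz⟩ : U) = ∑ j, b.repr ⟨z, hz⟩ j • b j := (b.sum_repr ⟨z, hz⟩).symm
      have hzeq : z = ∑ j, b.repr ⟨z, hz⟩ j • q j := by
        have := congrArg (Subtype.val) this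
        simpa only [hq, Submodule.coe_sum, Submodule.coe_smul] using this
      rw [hzeq, dot_sum_left]
      simp only [hqw, mul_zero, Finset.sum_const_zero]
    -- conclude w = 0
    have : w ⬝ᵥ w = 0 := by
      have hwT : w ∈ K ⊔ U := by rw [hU.sup_eq_top]; trivial
      obtain ⟨y, hy, z, hz, hyz⟩ := Submodule.mem_sup.1 hwT
      nth_rewrite 1 [← hyz]
      rw [add_dotProduct, hKw y hy, hUw z hz, add_zero]
    exact hw0 (dotProduct_self_eq_zero.1 this)
  -- block form of PᵀMP
  have hPMP : Pᵀ * M * P = Matrix.fromBlocks C 0 0 0 := by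
    ext k l
    rw [entry]
    match k, l with
    | Sum.inl k, Sum.inl l =>
      show q k ⬝ᵥ M.mulVec (q l) = C k l
      rfl
    | Sum.inl k, Sum.inr l =>
      show q k ⬝ᵥ M.mulVec x = (0 : Matrix (Fin r) Unit ℝ) k l
      rw [hxK]; simp
    | Sum.inr k, Sum.inl l =>
      show x ⬝ᵥ M.mulVec (q l) = (0 : Matrix Unit (Fin r) ℝ) k l
      rw [hdotM, hxK]; simp
    | Sum.inr k, Sum.inr l =>
      show x ⬝ᵥ M.mulVec x = (0 : Matrix Unit Unit ℝ) k l
      rw [hxK]; simp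
  set A' : Matrix (Fin r ⊕ Unit) (Fin r ⊕ Unit) ℝ := Pᵀ * A * P with hA'
  have hexp : ∀ t : ℝ, Pᵀ * (M + t • A) * P = Matrix.fromBlocks C 0 0 0 + t • A' := by
    intro t
    rw [Matrix.mul_add, Matrix.add_mul, hPMP, Matrix.mul_smul, Matrix.smul_mul, hA']
  set H : ℝ → Matrix (Fin r ⊕ Unit) (Fin r ⊕ Unit) ℝ := fun t =>
    Matrix.fromBlocks (C + t • A'.toBlocks₁₁) A'.toBlocks₁₂ (t • A'.toBlocks₂₁) A'.toBlocks₂₂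
    with hH
  have hfact : ∀ t : ℝ, Matrix.fromBlocks C 0 0 0 + t • A' =
      H t * Matrix.diagonal (Sum.elim (fun _ : Fin r => (1:ℝ)) fun _ : Unit => t) := by
    intro t
    ext k l
    rw [Matrix.mul_diagonal]
    match k, l with
    | Sum.inl k, Sum.inl l =>
      simp only [hH, Matrix.fromBlocks_apply₁₁, Matrix.add_apply, Matrix.smul_apply,
        Matrix.zero_apply, Matrix.toBlocks₁₁, Matrix.of_apply, Sum.elim_inl, smul_eq_mul]
      ring
    | Sum.inl k, Sum.inr l =>
      simp only [hH, Matrix.fromBlocks_apply₁₂, Matrix.add_apply, Matrix.smul_apply,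
        Matrix.zero_apply, Matrix.toBlocks₁₂, Matrix.of_apply, Sum.elim_inr, smul_eq_mul]
      ring
    | Sum.inr k, Sum.inl l =>
      simp only [hH, Matrix.fromBlocks_apply₂₁, Matrix.add_apply, Matrix.smul_apply,
        Matrix.zero_apply, Matrix.toBlocks₂₁, Matrix.of_apply, Sum.elim_inl, smul_eq_mul]
      ring
    | Sum.inr k, Sum.inr l =>
      simp only [hH, Matrix.fromBlocks_apply₂₂, Matrix.add_apply, Matrix.smul_apply,
        Matrix.zero_apply, Matrix.toBlocks₂₂, Matrix.of_apply, Sum.elim_inr, smul_eq_mul]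
      ring
  -- determinant of the diagonal factor is t
  have hdiag : ∀ t : ℝ,
      (Matrix.diagonal (Sum.elim (fun _ : Fin r => (1:ℝ)) fun _ : Unit => t)).det = t := by
    intro t
    rw [Matrix.det_diagonal, Fintype.prod_sum_type]
    simp
  -- continuity of t ↦ det (H t)
  have hHcont : Continuous fun t : ℝ => (H t).det := by
    apply Continuous.matrix_det
    apply continuous_matrix
    intro i j
    match i, j with
    | Sum.inl i, Sum.inl j =>
      simp only [hH, Matrix.fromBlocks_apply₁₁, Matrix.add_apply, Matrix.smul_apply,
        smul_eq_mul]
      fun_prop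
    | Sum.inl i, Sum.inr j =>
      simp only [hH, Matrix.fromBlocks_apply₁₂]
      fun_prop
    | Sum.inr i, Sum.inl j =>
      simp only [hH, Matrix.fromBlocks_apply₂₁, Matrix.smul_apply, smul_eq_mul]
      fun_prop
    | Sum.inr i, Sum.inr j =>
      simp only [hH, Matrix.fromBlocks_apply₂₂]
      fun_prop
  -- value at 0
  have hH0 : (H 0).det ≠ 0 := by
    have h0 : H 0 = Matrix.fromBlocks C A'.toBlocks₁₂ 0 A'.toBlocks₂₂ := by
      simp [hH]
    rw [h0, Matrix.det_fromBlocks_zero₂₁]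
    apply mul_ne_zero hCdet
    rw [Matrix.det_unique]
    have : A'.toBlocks₂₂ default default = x ⬝ᵥ A.mulVec x := by
      show A' (Sum.inr default) (Sum.inr default) = _
      rw [hA', entry]
      rfl
    rw [this]
    exact hc
  -- pick small nonzero t
  obtain ⟨t, htd, ht0⟩ : ∃ t : ℝ, (H t).det ≠ 0 ∧ t ≠ 0 := by
    have hev : ∀ᶠ t in nhds (0:ℝ), (H t).det ≠ 0 :=
      hHcont.continuousAt.eventually_ne hH0
    have h2 : ∀ᶠ t in nhdsWithin (0:ℝ) {(0:ℝ)}ᶜ, (H t).det ≠ 0 ∧ t ≠ 0 := by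
      filter_upwards [nhdsWithin_le_nhds hev, self_mem_nhdsWithin] with t h1 h2
      exact ⟨h1, h2⟩
    exact h2.exists
  -- the perturbed matrix has rank r+1 after compression
  have hdetG : (Pᵀ * (M + t • A) * P).det ≠ 0 := by
    rw [hexp t, hfact t, Matrix.det_mul, hdiag t]
    exact mul_ne_zero htd ht0
  have hunit : IsUnit (Pᵀ * (M + t • A) * P) :=
    (Matrix.isUnit_iff_isUnit_det _).2 (isUnit_iff_ne_zero.2 hdetG)
  have hrank1 : (Pᵀ * (M + t • A) * P).rank = r + 1 := by
    rw [Matrix.rank_of_isUnit _ hunit]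
    simp
  have hle : (Pᵀ * (M + t • A) * P).rank ≤ (M + t • A).rank := by
    rw [Matrix.mul_assoc]
    calc (Pᵀ * ((M + t • A) * P)).rank ≤ ((M + t • A) * P).rank :=
          Matrix.rank_mul_le_right _ _
      _ ≤ (M + t • A).rank := Matrix.rank_mul_le_left _ _
  have hmem : M + t • A ∈ W := W.add_mem hMW (W.smul_mem t hAW)
  have := hmax _ hmem
  omega




/-- TF2 invertibility: if no nonzero `η` is isotropic for all matrices `E[N_Y ψ(Y)]` with `ψ`
a finite linear combination from the family `Ψ`, then some such matrix is invertible. -/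
theorem tf2_exists_invertible_combination
    {Ω : Type*} [mΩ : MeasurableSpace Ω] (μ : Measure Ω) [IsProbabilityMeasure μ]
    (d : ℕ) (Y : Ω → ℝ) (hYmeas : Measurable Y)
    (NY : ℝ → Matrix (Fin d) (Fin d) ℝ) (hNYmeas : ∀ i j, Measurable fun y => NY y i j)
    (hNYsymm : ∀ y, (NY y).IsSymm)
    (hNYint : ∀ i j, Integrable (fun ω => NY (Y ω) i j) μ)
    -- nondegeneracy: for every nonzero `η`, `P(ηᵀ N_Y η = 0) < 1`
    (hnd : ∀ η : Fin d → ℝ, η ≠ 0 →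
      μ {ω | η ⬝ᵥ (NY (Y ω)).mulVec η = 0} < 1)
    -- the countable family of bounded measurable functions
    (Ψ : ℕ → ℝ → ℝ) (hΨmeas : ∀ k, Measurable (Ψ k))
    (hΨbdd : ∀ k, ∃ C : ℝ, ∀ y, |Ψ k y| ≤ C)
    -- no nonzero `η` is isotropic for all `E[N_Y ψ(Y)]`, `ψ` a finite combination from `Ψ`
    (hiso : ∀ η : Fin d → ℝ, η ≠ 0 → ∃ (s : Finset ℕ) (a : ℕ → ℝ),
      η ⬝ᵥ (Matrix.of fun i j =>
          ∫ ω, NY (Y ω) i j * ∑ k ∈ s, a k * Ψ k (Y ω) ∂μ).mulVec η ≠ 0) :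
    ∃ (s : Finset ℕ) (a : ℕ → ℝ),
      (Matrix.of fun i j =>
          ∫ ω, NY (Y ω) i j * ∑ k ∈ s, a k * Ψ k (Y ω) ∂μ : Matrix (Fin d) (Fin d) ℝ).det
        ≠ 0 := by
  classical
  set Mat : Finset ℕ → (ℕ → ℝ) → Matrix (Fin d) (Fin d) ℝ := fun s a =>
    Matrix.of fun i j => ∫ ω, NY (Y ω) i j * ∑ k ∈ s, a k * Ψ k (Y ω) ∂μ with hMat
  -- integrability of each integrand
  have hint : ∀ (s : Finset ℕ) (a : ℕ → ℝ) (i j : Fin d),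
      Integrable (fun ω => NY (Y ω) i j * ∑ k ∈ s, a k * Ψ k (Y ω)) μ := by
    intro s a i j
    have hmeas : Measurable fun y => ∑ k ∈ s, a k * Ψ k y :=
      Finset.measurable_sum s fun k _ => (hΨmeas k).const_mul (a k)
    have hbdd : ∃ C, ∀ ω, ‖∑ k ∈ s, a k * Ψ k (Y ω)‖ ≤ C := by
      choose C hC using hΨbdd
      refine ⟨∑ k ∈ s, |a k| * C k, fun ω => ?_⟩
      calc ‖∑ k ∈ s, a k * Ψ k (Y ω)‖ ≤ ∑ k ∈ s, ‖a k * Ψ k (Y ω)‖ := norm_sum_le _ _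
        _ ≤ ∑ k ∈ s, |a k| * C k := by
            refine Finset.sum_le_sum fun k _ => ?_
            rw [norm_mul, Real.norm_eq_abs, Real.norm_eq_abs]
            exact mul_le_mul_of_nonneg_left (hC k (Y ω)) (abs_nonneg _)
    have h1 := (hNYint i j).bdd_mul ((hmeas.comp hYmeas).aestronglyMeasurable) (Filter.Eventually.of_forall hbdd.choose_spec)
    have heq : (fun ω => NY (Y ω) i j * ∑ k ∈ s, a k * Ψ k (Y ω)) =
        fun ω => (∑ k ∈ s, a k * Ψ k (Y ω)) * NY (Y ω) i j := by
      funext ω; ring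
    rw [heq]; exact h1
  -- the submodule of achievable matrices
  set W : Submodule ℝ (Matrix (Fin d) (Fin d) ℝ) :=
    { carrier := {M | ∃ s a, M = Mat s a}
      zero_mem' := by
        refine ⟨∅, fun _ => 0, ?_⟩
        ext i j
        simp [hMat]
      add_mem' := by
        rintro M₁ M₂ ⟨s₁, a₁, rfl⟩ ⟨s₂, a₂, rfl⟩
        refine ⟨s₁ ∪ s₂,
          fun k => (if k ∈ s₁ then a₁ k else 0) + (if k ∈ s₂ then a₂ k else 0), ?_⟩
        have hsum : ∀ y, ∑ k ∈ s₁ ∪ s₂,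
            ((if k ∈ s₁ then a₁ k else 0) + (if k ∈ s₂ then a₂ k else 0)) * Ψ k y =
            (∑ k ∈ s₁, a₁ k * Ψ k y) + ∑ k ∈ s₂, a₂ k * Ψ k y := by
          intro y
          simp only [add_mul, ite_mul, zero_mul]
          rw [Finset.sum_add_distrib, Finset.sum_ite_mem, Finset.sum_ite_mem,
            Finset.union_inter_cancel_left, Finset.union_inter_cancel_right]
        ext i j
        simp only [hMat, Matrix.add_apply, Matrix.of_apply]
        rw [← integral_add (hint s₁ a₁ i j) (hint s₂ a₂ i j)]
        congr 1
        funext ω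
        rw [hsum (Y ω)]
        ring
      smul_mem' := by
        rintro c M ⟨s, a, rfl⟩
        refine ⟨s, fun k => c * a k, ?_⟩
        have hsum : ∀ y, ∑ k ∈ s, (c * a k) * Ψ k y = c * ∑ k ∈ s, a k * Ψ k y := by
          intro y
          rw [Finset.mul_sum]
          exact Finset.sum_congr rfl fun k _ => by ring
        ext i j
        simp only [hMat, Matrix.smul_apply, Matrix.of_apply, smul_eq_mul]
        rw [← MeasureTheory.integral_const_mul]
        congr 1
        funext ω
        rw [hsum (Y ω)]
        ring } with hW
  have hsymm : ∀ M ∈ W, M.IsSymm := by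
    rintro M ⟨s, a, rfl⟩
    show (Mat s a)ᵀ = Mat s a
    ext i j
    simp only [hMat, Matrix.transpose_apply, Matrix.of_apply]
    congr 1
    funext ω
    congr 1
    exact (hNYsymm (Y ω)).apply i j
  have hiso' : ∀ η : Fin d → ℝ, η ≠ 0 → ∃ M ∈ W, η ⬝ᵥ M.mulVec η ≠ 0 := by
    intro η hη
    obtain ⟨s, a, h⟩ := hiso η hη
    exact ⟨Mat s a, ⟨s, a, rfl⟩, h⟩
  obtain ⟨M, hMW, hdet⟩ := core_invertible W hsymm hiso'
  obtain ⟨s, a, rfl⟩ := hMW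
  exact ⟨s, a, hdet⟩
end

section
/- Let Z be a square-integrable random vector in R^p satisfying the linearity condition Q_c E[Z|P_cZ] = 0 a.s., where P_c is the orthogonal projection onto the central subspace E_c and Q_c = I − P_c, and let Y be a random variable with Y ⫫ Z | P_c Z. Then tr(Var(Z|Y)) = E[‖Q_c Z‖² | Y] + tr(Var(P_c Z | Y)) almost surely. -/
open MeasureTheory Matrix
open scoped ENNReal NNReal

/-- The `(i,j)` entry of the conditional covariance matrix of a random vector `W` given the
σ-algebra `m`. -/
noncomputable def condVarEntry {Ω : Type*} (mΩ : MeasurableSpace Ω)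
    (μ : @MeasureTheory.Measure Ω mΩ)
    (m : MeasurableSpace Ω) {p : ℕ} (W : Ω → (Fin p → ℝ)) (i j : Fin p) : Ω → ℝ :=
  μ[fun ω => (W ω i - (μ[fun ω' => W ω' i | m]) ω) *
      (W ω j - (μ[fun ω' => W ω' j | m]) ω) | m]

section aux

variable {α : Type*} {m0 : MeasurableSpace α} {μ : Measure α}

private lemma mul_integrable_of_memLp_two {f g : α → ℝ}
    (hf : MemLp f 2 μ) (hg : MemLp g 2 μ) : Integrable (fun ω => f ω * g ω) μ := by
  rw [← memLp_one_iff_integrable]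
  have h : (1 : ℝ≥0∞) / 1 = 1 / 2 + 1 / 2 := by
    rw [ENNReal.add_halves, one_div_one]
  have : ENNReal.HolderTriple 2 2 1 := ⟨by rw [ENNReal.inv_two_add_inv_two, inv_one]⟩
  have h2 : MemLp (g • f) 1 μ := hf.smul hg
  have h3 : (g • f) = fun ω => f ω * g ω := funext fun ω => by
    simp [mul_comm]
  rwa [h3] at h2

private lemma memLp_two_condExp [IsFiniteMeasure μ] {m : MeasurableSpace α} (hm : m ≤ m0)
    {f : α → ℝ} (hf : MemLp f 2 μ) : MemLp (μ[f|m]) 2 μ := by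
  set gL : α →₂[μ] ℝ := (condExpL2 ℝ ℝ hm (hf.toLp f) : α →₂[μ] ℝ) with hgL
  have hg2 : MemLp (gL : α → ℝ) 2 μ := Lp.memLp _
  have hgi : Integrable (gL : α → ℝ) μ := hg2.integrable one_le_two
  refine hg2.ae_eq ?_
  refine ae_eq_condExp_of_forall_setIntegral_eq hm (hf.integrable one_le_two) ?_ ?_ ?_
  · intro s hs hμs
    exact hgi.restrict
  · intro s hs hμs
    rw [integral_condExpL2_eq hm (hf.toLp f) hs hμs.ne]
    exact integral_congr_ae (ae_restrict_of_ae hf.coeFn_toLp)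
  · exact aestronglyMeasurable_condExpL2 hm _

end aux

/-- Trace decomposition of the conditional variance:
`tr(Var(Z|Y)) = E[‖Q_c Z‖² | Y] + tr(Var(P_c Z | Y))` a.s., under the linearity condition and
`Y ⫫ Z | P_c Z`. -/
theorem trace_condVar_decomposition
    {Ω : Type*} [mΩ : MeasurableSpace Ω] (μ : Measure Ω) [IsProbabilityMeasure μ]
    (p : ℕ) (Z : Ω → (Fin p → ℝ)) (hZmeas : Measurable Z)
    (hZint2 : ∀ i j, Integrable (fun ω => Z ω i * Z ω j) μ)
    (Y : Ω → ℝ) (hYmeas : Measurable Y)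
    (Pc : Matrix (Fin p) (Fin p) ℝ) (hPcsymm : Pc.IsSymm) (hPcidem : Pc * Pc = Pc)
    (mZ : MeasurableSpace Ω) (hmZ : mZ = MeasurableSpace.comap Z inferInstance)
    (m : MeasurableSpace Ω)
    (hm : m = MeasurableSpace.comap (fun ω => Pc.mulVec (Z ω)) inferInstance)
    (mY : MeasurableSpace Ω) (hmY : mY = MeasurableSpace.comap Y inferInstance)
    -- `Y ⫫ Z | P_c Z`
    (hCS : ∀ A : Set ℝ, MeasurableSet A →
      μ[fun ω => Set.indicator A (fun _ => (1 : ℝ)) (Y ω) | mZ]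
        =ᵐ[μ] μ[fun ω => Set.indicator A (fun _ => (1 : ℝ)) (Y ω) | m])
    -- linearity condition
    (hlin : ∀ᵐ ω ∂μ, (1 - Pc).mulVec (fun i => (μ[fun ω' => Z ω' i | m]) ω) = 0) :
    ∀ᵐ ω ∂μ,
      ∑ i, condVarEntry mΩ μ mY Z i i ω =
        (μ[fun ω' => ∑ j, ((1 - Pc).mulVec (Z ω') j) ^ 2 | mY]) ω +
          ∑ i, condVarEntry mΩ μ mY (fun ω' => Pc.mulVec (Z ω')) i i ω := by
  letI : MeasurableSpace Ω := mΩ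
  -- basic measurability and order facts
  have hmZ_le : mZ ≤ mΩ := by rw [hmZ]; exact hZmeas.comap_le
  have hmulVec_cont : ∀ M : Matrix (Fin p) (Fin p) ℝ,
      Continuous fun v : Fin p → ℝ => M.mulVec v := fun M =>
    LinearMap.continuous_of_finiteDimensional (Matrix.mulVecLin M)
  have hPcZmeas : Measurable[mΩ] fun ω => Pc.mulVec (Z ω) :=
    ((hmulVec_cont Pc).measurable).comp hZmeas
  have hm_le : m ≤ mΩ := by rw [hm]; exact hPcZmeas.comap_le
  have hmY_le : mY ≤ mΩ := by rw [hmY]; exact hYmeas.comap_le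
  have hZi_meas : ∀ i, Measurable[mΩ] fun ω => Z ω i := fun i =>
    (measurable_pi_apply i).comp hZmeas
  have hZ2 : ∀ i, MemLp (fun ω => Z ω i) 2 μ := by
    intro i
    rw [memLp_two_iff_integrable_sq (hZi_meas i).aestronglyMeasurable]
    simpa [pow_two] using hZint2 i i
  have hMrw : ∀ (M : Matrix (Fin p) (Fin p) ℝ) (i : Fin p),
      (fun ω => M.mulVec (Z ω) i) = fun ω => ∑ j, M i j * Z ω j := by
    intro M i; funext ω; simp [Matrix.mulVec, dotProduct]
  have hM2 : ∀ (M : Matrix (Fin p) (Fin p) ℝ) (i : Fin p),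
      MemLp (fun ω => M.mulVec (Z ω) i) 2 μ := by
    intro M i
    rw [hMrw M i]
    exact memLp_finset_sum Finset.univ fun j _ => (hZ2 j).const_mul (M i j)
  have hZi_int : ∀ i, Integrable (fun ω => Z ω i) μ := fun i =>
    (hZ2 i).integrable one_le_two
  have hMi_int : ∀ (M : Matrix (Fin p) (Fin p) ℝ) (i : Fin p),
      Integrable (fun ω => M.mulVec (Z ω) i) μ := fun M i =>
    (hM2 M i).integrable one_le_two
  -- Step A : E[(Q_c Z)_i | m] = 0 a.s.
  have hQm : ∀ i, μ[fun ω => (1 - Pc).mulVec (Z ω) i|m] =ᵐ[μ] 0 := by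
    intro i
    have h3 : (fun ω => (1 - Pc).mulVec (Z ω) i)
        = ∑ j : Fin p, fun ω => (1 - Pc) i j * Z ω j := by
      funext ω
      simp [Matrix.mulVec, dotProduct, Finset.sum_apply]
    have hsum := condExp_finset_sum (μ := μ) (m := m) (s := Finset.univ)
      (f := fun j => fun ω => (1 - Pc) i j * Z ω j)
      (fun j _ => (hZi_int j).const_mul _)
    have h2 : ∀ j : Fin p, μ[fun ω => (1 - Pc) i j * Z ω j|m]
        =ᵐ[μ] fun ω => (1 - Pc) i j * (μ[fun ω' => Z ω' j|m]) ω := by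
      intro j
      have hc := condExp_smul (μ := μ) (m := m) ((1 - Pc) i j) (fun ω => Z ω j)
      refine (Filter.EventuallyEq.trans ?_ hc).trans ?_
      · exact Filter.EventuallyEq.rfl
      · filter_upwards with ω; simp
    have h2' : ∀ᵐ ω ∂μ, ∀ j : Fin p, (μ[fun ω0 => (1 - Pc) i j * Z ω0 j|m]) ω
        = (1 - Pc) i j * (μ[fun ω' => Z ω' j|m]) ω := ae_all_iff.2 h2
    rw [h3]
    refine hsum.trans ?_
    filter_upwards [h2', hlin] with ω hω hlinω
    have hz : ∑ j, (1 - Pc) i j * (μ[fun ω' => Z ω' j|m]) ω = 0 := by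
      have := congrFun hlinω i
      simpa [Matrix.mulVec, dotProduct] using this
    calc (∑ j : Fin p, μ[fun ω0 => (1 - Pc) i j * Z ω0 j|m]) ω
        = ∑ j, (μ[fun ω0 => (1 - Pc) i j * Z ω0 j|m]) ω := by
          simp [Finset.sum_apply]
      _ = ∑ j, (1 - Pc) i j * (μ[fun ω' => Z ω' j|m]) ω :=
          Finset.sum_congr rfl fun j _ => hω j
      _ = 0 := hz
      _ = (0 : Ω → ℝ) ω := by simp
  -- Step B : E[(Q_c Z)_i | mY] = 0 a.s.
  have hZmZ : Measurable[mZ] Z := by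
    rw [hmZ]; exact measurable_iff_comap_le.2 le_rfl
  have hQY : ∀ i, μ[fun ω => (1 - Pc).mulVec (Z ω) i|mY] =ᵐ[μ] 0 := by
    intro i
    have hint0 : ∀ s : Set Ω, MeasurableSet[mY] s →
        ∫ ω in s, (1 - Pc).mulVec (Z ω) i ∂μ = 0 := by
      intro s hs
      rw [hmY] at hs
      obtain ⟨A, hA, rfl⟩ := hs
      have hYA : MeasurableSet[mΩ] (Y ⁻¹' A) := hYmeas hA
      have hgind : (fun ω => Set.indicator A (fun _ => (1:ℝ)) (Y ω))
          = Set.indicator (Y ⁻¹' A) (fun _ => (1:ℝ)) := by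
        funext ω; by_cases h : Y ω ∈ A <;> simp [Set.indicator, h]
      have hg_int : Integrable (fun ω => Set.indicator A (fun _ => (1:ℝ)) (Y ω)) μ := by
        rw [hgind]; exact (integrable_const (1:ℝ)).indicator hYA
      have hprod_eq : (fun ω => (1 - Pc).mulVec (Z ω) i
            * Set.indicator A (fun _ => (1:ℝ)) (Y ω))
          = Set.indicator (Y ⁻¹' A) (fun ω => (1 - Pc).mulVec (Z ω) i) := by
        funext ω; by_cases h : Y ω ∈ A <;> simp [Set.indicator, h]
      have hfg_int : Integrable (fun ω => (1 - Pc).mulVec (Z ω) i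
          * Set.indicator A (fun _ => (1:ℝ)) (Y ω)) μ := by
        rw [hprod_eq]; exact (hMi_int (1-Pc) i).indicator hYA
      have hQZmZ : StronglyMeasurable[mZ] (fun ω => (1 - Pc).mulVec (Z ω) i) := by
        refine Measurable.stronglyMeasurable ?_
        exact ((continuous_apply i).comp (hmulVec_cont (1 - Pc))).measurable.comp hZmZ
      -- conditional-expectation bound for the indicator
      have hc_bdd : ∀ᵐ ω ∂μ,
          ‖(μ[fun ω' => Set.indicator A (fun _ => (1:ℝ)) (Y ω')|m]) ω‖ ≤ ((1:ℝ≥0) : ℝ) := by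
        have hb : ∀ᵐ ω ∂μ, |Set.indicator A (fun _ => (1:ℝ)) (Y ω)| ≤ ((1:ℝ≥0) : ℝ) := by
          filter_upwards with ω
          by_cases h : Y ω ∈ A <;> simp [Set.indicator, h]
        filter_upwards [ae_bdd_condExp_of_ae_bdd (R := 1) hb] with ω h
        simpa [Real.norm_eq_abs] using h
      have hint2 : Integrable (fun ω =>
          (μ[fun ω' => Set.indicator A (fun _ => (1:ℝ)) (Y ω')|m]) ω
            * ((1 - Pc).mulVec (Z ω) i)) μ :=
        (hMi_int (1-Pc) i).bdd_mul
          ((stronglyMeasurable_condExp.mono hm_le).aestronglyMeasurable) hc_bdd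
      calc ∫ ω in Y ⁻¹' A, (1 - Pc).mulVec (Z ω) i ∂μ
          = ∫ ω, (fun ω => (1 - Pc).mulVec (Z ω) i
              * Set.indicator A (fun _ => (1:ℝ)) (Y ω)) ω ∂μ := by
            rw [hprod_eq, integral_indicator hYA]
        _ = ∫ ω, (μ[fun ω' => (1 - Pc).mulVec (Z ω') i
              * Set.indicator A (fun _ => (1:ℝ)) (Y ω')|mZ]) ω ∂μ :=
            (integral_condExp hmZ_le).symm
        _ = ∫ ω, (fun ω' => (1 - Pc).mulVec (Z ω') i) ω
              * (μ[fun ω' => Set.indicator A (fun _ => (1:ℝ)) (Y ω')|mZ]) ω ∂μ :=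
            integral_congr_ae (condExp_mul_of_stronglyMeasurable_left hQZmZ hfg_int hg_int)
        _ = ∫ ω, (1 - Pc).mulVec (Z ω) i
              * (μ[fun ω' => Set.indicator A (fun _ => (1:ℝ)) (Y ω')|m]) ω ∂μ := by
            refine integral_congr_ae ?_
            filter_upwards [hCS A hA] with ω h
            simp only [h]
        _ = ∫ ω, (μ[fun ω' => Set.indicator A (fun _ => (1:ℝ)) (Y ω')|m]) ω
              * ((1 - Pc).mulVec (Z ω) i) ∂μ := by
            refine integral_congr_ae ?_
            filter_upwards with ω
            ring
        _ = ∫ ω, (μ[fun ω' =>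
              (μ[fun ω'' => Set.indicator A (fun _ => (1:ℝ)) (Y ω'')|m]) ω'
              * ((1 - Pc).mulVec (Z ω') i)|m]) ω ∂μ :=
            (integral_condExp hm_le).symm
        _ = 0 := by
            have hpull := condExp_mul_of_stronglyMeasurable_left (μ := μ) (m := m)
              (f := μ[fun ω'' => Set.indicator A (fun _ => (1:ℝ)) (Y ω'')|m])
              (g := fun ω => (1 - Pc).mulVec (Z ω) i)
              stronglyMeasurable_condExp hint2 (hMi_int (1-Pc) i)
            have hzero : (μ[fun ω' =>
                (μ[fun ω'' => Set.indicator A (fun _ => (1:ℝ)) (Y ω'')|m]) ω'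
                * ((1 - Pc).mulVec (Z ω') i)|m]) =ᵐ[μ] 0 := by
              refine hpull.trans ?_
              filter_upwards [hQm i] with ω h
              simp [h]
            rw [integral_congr_ae hzero]
            simp
    have h := ae_eq_condExp_of_forall_setIntegral_eq (μ := μ) hmY_le (hMi_int (1-Pc) i)
      (fun s _ _ => (integrable_zero Ω ℝ μ).restrict)
      (fun s hs _ => by
        rw [hint0 s hs]
        simp)
      ((stronglyMeasurable_const (b := (0:ℝ))).aestronglyMeasurable)
    exact h.symm
  -- decomposition Z = P_c Z + Q_c Z
  have hsplitZ : ∀ i, (fun ω => Z ω i)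
      = fun ω => Pc.mulVec (Z ω) i + (1 - Pc).mulVec (Z ω) i := by
    intro i; funext ω
    have hPQ : Pc + (1 - Pc) = (1 : Matrix (Fin p) (Fin p) ℝ) := by abel
    calc Z ω i = (1 : Matrix (Fin p) (Fin p) ℝ).mulVec (Z ω) i := by
          rw [Matrix.one_mulVec]
      _ = (Pc + (1 - Pc)).mulVec (Z ω) i := by rw [hPQ]
      _ = Pc.mulVec (Z ω) i + (1 - Pc).mulVec (Z ω) i := by
          rw [Matrix.add_mulVec]; simp
  have hEZ : ∀ i, μ[fun ω' => Z ω' i|mY] =ᵐ[μ] μ[fun ω' => Pc.mulVec (Z ω') i|mY] := by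
    intro i
    rw [hsplitZ i]
    have hadd := condExp_add (μ := μ) (m := mY) (hMi_int Pc i) (hMi_int (1-Pc) i)
    refine Filter.EventuallyEq.trans hadd ?_
    filter_upwards [hQY i] with ω h
    simp [h]
  -- L² facts
  have hCP2 : ∀ i, MemLp (μ[fun ω' => Pc.mulVec (Z ω') i|mY]) 2 μ := fun i =>
    memLp_two_condExp hmY_le (hM2 Pc i)
  have hB2 : ∀ i, MemLp (fun ω =>
      Pc.mulVec (Z ω) i - (μ[fun ω' => Pc.mulVec (Z ω') i|mY]) ω) 2 μ := fun i =>
    (hM2 Pc i).sub (hCP2 i)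
  have hBQ2 : ∀ i, MemLp (fun ω =>
      (Pc.mulVec (Z ω) i - (μ[fun ω' => Pc.mulVec (Z ω') i|mY]) ω)
        + (1 - Pc).mulVec (Z ω) i) 2 μ := fun i =>
    (hB2 i).add (hM2 (1-Pc) i)
  -- Step 1 : rewrite each diagonal entry of Var(Z|Y)
  have hstep1 : ∀ i, condVarEntry mΩ μ mY Z i i =ᵐ[μ]
      μ[fun ω => ((Pc.mulVec (Z ω) i - (μ[fun ω' => Pc.mulVec (Z ω') i|mY]) ω)
          + (1 - Pc).mulVec (Z ω) i)
        * ((Pc.mulVec (Z ω) i - (μ[fun ω' => Pc.mulVec (Z ω') i|mY]) ω)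
          + (1 - Pc).mulVec (Z ω) i)|mY] := by
    intro i
    unfold condVarEntry
    refine condExp_congr_ae ?_
    filter_upwards [hEZ i] with ω hω
    have hzz := congrFun (hsplitZ i) ω
    rw [hzz, hω]
    ring
  -- orthogonality of P_c Z and Q_c Z, pointwise
  have horth : ∀ ω, ∑ i, Pc.mulVec (Z ω) i * (1 - Pc).mulVec (Z ω) i = 0 := by
    intro ω
    have h1 : Pc * (1 - Pc) = 0 := by
      rw [Matrix.mul_sub, Matrix.mul_one, hPcidem, sub_self]
    have h2 : Pc.mulVec (Z ω) = (Z ω) ᵥ* Pc := by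
      conv_lhs => rw [← hPcsymm]
      rw [Matrix.mulVec_transpose]
    calc ∑ i, Pc.mulVec (Z ω) i * (1 - Pc).mulVec (Z ω) i
        = Pc.mulVec (Z ω) ⬝ᵥ (1 - Pc).mulVec (Z ω) := rfl
      _ = ((Z ω) ᵥ* Pc) ⬝ᵥ (1 - Pc).mulVec (Z ω) := by rw [h2]
      _ = (((Z ω) ᵥ* Pc) ᵥ* (1 - Pc)) ⬝ᵥ (Z ω) := by rw [Matrix.dotProduct_mulVec]
      _ = ((Z ω) ᵥ* (Pc * (1 - Pc))) ⬝ᵥ (Z ω) := by rw [Matrix.vecMul_vecMul]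
      _ = 0 := by rw [h1]; simp
  -- pointwise algebraic expansion of the sum of squares
  have key : ∀ ω : Ω,
      (∑ i, (((Pc.mulVec (Z ω) i - (μ[fun ω' => Pc.mulVec (Z ω') i|mY]) ω)
          + (1 - Pc).mulVec (Z ω) i)
        * ((Pc.mulVec (Z ω) i - (μ[fun ω' => Pc.mulVec (Z ω') i|mY]) ω)
          + (1 - Pc).mulVec (Z ω) i)))
      = (∑ i, ((Pc.mulVec (Z ω) i - (μ[fun ω' => Pc.mulVec (Z ω') i|mY]) ω)
            * (Pc.mulVec (Z ω) i - (μ[fun ω' => Pc.mulVec (Z ω') i|mY]) ω)))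
        + (∑ j, ((1 - Pc).mulVec (Z ω) j) ^ 2)
        + ((-2 : ℝ) * ∑ i, (μ[fun ω' => Pc.mulVec (Z ω') i|mY]) ω
            * (1 - Pc).mulVec (Z ω) i) := by
    intro ω
    have hexp : ∀ i : Fin p,
        (((Pc.mulVec (Z ω) i - (μ[fun ω' => Pc.mulVec (Z ω') i|mY]) ω)
          + (1 - Pc).mulVec (Z ω) i)
        * ((Pc.mulVec (Z ω) i - (μ[fun ω' => Pc.mulVec (Z ω') i|mY]) ω)
          + (1 - Pc).mulVec (Z ω) i))
        = ((Pc.mulVec (Z ω) i - (μ[fun ω' => Pc.mulVec (Z ω') i|mY]) ω)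
            * (Pc.mulVec (Z ω) i - (μ[fun ω' => Pc.mulVec (Z ω') i|mY]) ω)
          + ((1 - Pc).mulVec (Z ω) i) ^ 2
          + ((2:ℝ) * (Pc.mulVec (Z ω) i * (1 - Pc).mulVec (Z ω) i)
            + (-2 : ℝ) * ((μ[fun ω' => Pc.mulVec (Z ω') i|mY]) ω
              * (1 - Pc).mulVec (Z ω) i))) := by
      intro i; ring
    rw [Finset.sum_congr rfl fun i _ => hexp i]
    rw [Finset.sum_add_distrib, Finset.sum_add_distrib, Finset.sum_add_distrib,
      ← Finset.mul_sum, ← Finset.mul_sum, horth ω, mul_zero, zero_add]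
  -- integrability of the pieces
  have hG1int : Integrable (fun ω => ∑ i,
      ((Pc.mulVec (Z ω) i - (μ[fun ω' => Pc.mulVec (Z ω') i|mY]) ω)
        * (Pc.mulVec (Z ω) i - (μ[fun ω' => Pc.mulVec (Z ω') i|mY]) ω))) μ :=
    integrable_finset_sum _ fun i _ => mul_integrable_of_memLp_two (hB2 i) (hB2 i)
  have hG2int : Integrable (fun ω => ∑ j, ((1 - Pc).mulVec (Z ω) j) ^ 2) μ :=
    integrable_finset_sum _ fun j _ => (hM2 (1-Pc) j).integrable_sq
  have hCPQint : ∀ i, Integrable (fun ω =>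
      (μ[fun ω' => Pc.mulVec (Z ω') i|mY]) ω * (1 - Pc).mulVec (Z ω) i) μ :=
    fun i => mul_integrable_of_memLp_two (hCP2 i) (hM2 (1-Pc) i)
  have hG3aint : Integrable (fun ω => ∑ i,
      (μ[fun ω' => Pc.mulVec (Z ω') i|mY]) ω * (1 - Pc).mulVec (Z ω) i) μ :=
    integrable_finset_sum _ fun i _ => hCPQint i
  have hG3int : Integrable (fun ω => (-2 : ℝ) * ∑ i,
      (μ[fun ω' => Pc.mulVec (Z ω') i|mY]) ω * (1 - Pc).mulVec (Z ω) i) μ :=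
    hG3aint.const_mul _
  -- the conditional expectation of the cross term vanishes
  have hcross : μ[fun ω => ∑ i,
      (μ[fun ω' => Pc.mulVec (Z ω') i|mY]) ω * (1 - Pc).mulVec (Z ω) i|mY] =ᵐ[μ] 0 := by
    have hrw : (fun ω => ∑ i, (μ[fun ω' => Pc.mulVec (Z ω') i|mY]) ω
          * (1 - Pc).mulVec (Z ω) i)
        = ∑ i : Fin p, fun ω => (μ[fun ω' => Pc.mulVec (Z ω') i|mY]) ω
          * (1 - Pc).mulVec (Z ω) i := by
      funext ω; simp
    rw [hrw]
    refine (condExp_finset_sum (fun i _ => hCPQint i) _).trans ?_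
    have hterm : ∀ i : Fin p, μ[fun ω => (μ[fun ω' => Pc.mulVec (Z ω') i|mY]) ω
        * (1 - Pc).mulVec (Z ω) i|mY] =ᵐ[μ] 0 := by
      intro i
      have hp := condExp_mul_of_stronglyMeasurable_left (μ := μ) (m := mY)
        (f := μ[fun ω' => Pc.mulVec (Z ω') i|mY])
        (g := fun ω => (1 - Pc).mulVec (Z ω) i)
        stronglyMeasurable_condExp (hCPQint i) (hMi_int (1-Pc) i)
      refine hp.trans ?_
      filter_upwards [hQY i] with ω h
      simp [h]
    filter_upwards [ae_all_iff.2 hterm] with ω h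
    simp only [Finset.sum_apply, Pi.zero_apply]
    exact Finset.sum_eq_zero fun i _ => by simpa using h i
  have hG3zero : μ[fun ω => (-2 : ℝ) * ∑ i,
      (μ[fun ω' => Pc.mulVec (Z ω') i|mY]) ω * (1 - Pc).mulVec (Z ω) i|mY] =ᵐ[μ] 0 := by
    have hrw : (fun ω => (-2 : ℝ) * ∑ i, (μ[fun ω' => Pc.mulVec (Z ω') i|mY]) ω
          * (1 - Pc).mulVec (Z ω) i)
        = (-2 : ℝ) • (fun ω => ∑ i, (μ[fun ω' => Pc.mulVec (Z ω') i|mY]) ω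
          * (1 - Pc).mulVec (Z ω) i) := rfl
    rw [hrw]
    refine (condExp_smul (μ := μ) (m := mY) (-2 : ℝ) _).trans ?_
    filter_upwards [hcross] with ω h
    simp only [Pi.smul_apply, smul_eq_mul]
    simp [h]
  -- split the conditional expectation of G1 into the sum of entries
  have hG1split : μ[fun ω => ∑ i,
      ((Pc.mulVec (Z ω) i - (μ[fun ω' => Pc.mulVec (Z ω') i|mY]) ω)
        * (Pc.mulVec (Z ω) i - (μ[fun ω' => Pc.mulVec (Z ω') i|mY]) ω))|mY] =ᵐ[μ]
      fun ω => ∑ i, (μ[fun ω0 =>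
        ((Pc.mulVec (Z ω0) i - (μ[fun ω' => Pc.mulVec (Z ω') i|mY]) ω0)
          * (Pc.mulVec (Z ω0) i - (μ[fun ω' => Pc.mulVec (Z ω') i|mY]) ω0))|mY]) ω := by
    have hrw : (fun ω => ∑ i,
        ((Pc.mulVec (Z ω) i - (μ[fun ω' => Pc.mulVec (Z ω') i|mY]) ω)
          * (Pc.mulVec (Z ω) i - (μ[fun ω' => Pc.mulVec (Z ω') i|mY]) ω)))
        = ∑ i : Fin p, fun ω =>
          ((Pc.mulVec (Z ω) i - (μ[fun ω' => Pc.mulVec (Z ω') i|mY]) ω)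
            * (Pc.mulVec (Z ω) i - (μ[fun ω' => Pc.mulVec (Z ω') i|mY]) ω)) := by
      funext ω; simp
    rw [hrw]
    refine (condExp_finset_sum (fun i _ =>
      mul_integrable_of_memLp_two (hB2 i) (hB2 i)) _).trans ?_
    filter_upwards with ω
    simp
  -- split the conditional expectation of the expanded square sum
  have hsumBQ : μ[fun ω => ∑ i,
      (((Pc.mulVec (Z ω) i - (μ[fun ω' => Pc.mulVec (Z ω') i|mY]) ω)
          + (1 - Pc).mulVec (Z ω) i)
        * ((Pc.mulVec (Z ω) i - (μ[fun ω' => Pc.mulVec (Z ω') i|mY]) ω)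
          + (1 - Pc).mulVec (Z ω) i))|mY] =ᵐ[μ]
      fun ω => ∑ i, (μ[fun ω0 =>
        (((Pc.mulVec (Z ω0) i - (μ[fun ω' => Pc.mulVec (Z ω') i|mY]) ω0)
            + (1 - Pc).mulVec (Z ω0) i)
          * ((Pc.mulVec (Z ω0) i - (μ[fun ω' => Pc.mulVec (Z ω') i|mY]) ω0)
            + (1 - Pc).mulVec (Z ω0) i))|mY]) ω := by
    have hrw : (fun ω => ∑ i,
        (((Pc.mulVec (Z ω) i - (μ[fun ω' => Pc.mulVec (Z ω') i|mY]) ω)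
            + (1 - Pc).mulVec (Z ω) i)
          * ((Pc.mulVec (Z ω) i - (μ[fun ω' => Pc.mulVec (Z ω') i|mY]) ω)
            + (1 - Pc).mulVec (Z ω) i)))
        = ∑ i : Fin p, fun ω =>
          (((Pc.mulVec (Z ω) i - (μ[fun ω' => Pc.mulVec (Z ω') i|mY]) ω)
              + (1 - Pc).mulVec (Z ω) i)
            * ((Pc.mulVec (Z ω) i - (μ[fun ω' => Pc.mulVec (Z ω') i|mY]) ω)
              + (1 - Pc).mulVec (Z ω) i)) := by
      funext ω; simp
    rw [hrw]
    refine (condExp_finset_sum (fun i _ =>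
      mul_integrable_of_memLp_two (hBQ2 i) (hBQ2 i)) _).trans ?_
    filter_upwards with ω
    simp
  -- middle chain : conditional expectation of the expanded sum
  have hmid : μ[fun ω => ∑ i,
      (((Pc.mulVec (Z ω) i - (μ[fun ω' => Pc.mulVec (Z ω') i|mY]) ω)
          + (1 - Pc).mulVec (Z ω) i)
        * ((Pc.mulVec (Z ω) i - (μ[fun ω' => Pc.mulVec (Z ω') i|mY]) ω)
          + (1 - Pc).mulVec (Z ω) i))|mY] =ᵐ[μ]
      fun ω => (μ[fun ω' => ∑ j, ((1 - Pc).mulVec (Z ω') j) ^ 2|mY]) ω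
        + ∑ i, (μ[fun ω0 =>
          ((Pc.mulVec (Z ω0) i - (μ[fun ω' => Pc.mulVec (Z ω') i|mY]) ω0)
            * (Pc.mulVec (Z ω0) i - (μ[fun ω' => Pc.mulVec (Z ω') i|mY]) ω0))|mY]) ω := by
    have hkeyfun : (fun ω => ∑ i,
        (((Pc.mulVec (Z ω) i - (μ[fun ω' => Pc.mulVec (Z ω') i|mY]) ω)
            + (1 - Pc).mulVec (Z ω) i)
          * ((Pc.mulVec (Z ω) i - (μ[fun ω' => Pc.mulVec (Z ω') i|mY]) ω)
            + (1 - Pc).mulVec (Z ω) i)))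
        = fun ω =>
          (∑ i, ((Pc.mulVec (Z ω) i - (μ[fun ω' => Pc.mulVec (Z ω') i|mY]) ω)
              * (Pc.mulVec (Z ω) i - (μ[fun ω' => Pc.mulVec (Z ω') i|mY]) ω)))
          + (∑ j, ((1 - Pc).mulVec (Z ω) j) ^ 2)
          + ((-2 : ℝ) * ∑ i, (μ[fun ω' => Pc.mulVec (Z ω') i|mY]) ω
              * (1 - Pc).mulVec (Z ω) i) := funext key
    rw [hkeyfun]
    have hadd2 := condExp_add (μ := μ) (m := mY) (hG1int.add hG2int) hG3int
    have hadd1 := condExp_add (μ := μ) (m := mY) hG1int hG2int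
    refine Filter.EventuallyEq.trans hadd2 ?_
    filter_upwards [hadd1, hG3zero, hG1split] with ω ha1 h3ω hsω
    simp only [Pi.add_apply, Pi.zero_apply] at *
    rw [ha1, h3ω, hsω]
    ring
  -- final combination
  have hstep1' : ∀ᵐ ω ∂μ, ∀ i, condVarEntry mΩ μ mY Z i i ω
      = (μ[fun ω0 =>
        (((Pc.mulVec (Z ω0) i - (μ[fun ω' => Pc.mulVec (Z ω') i|mY]) ω0)
            + (1 - Pc).mulVec (Z ω0) i)
          * ((Pc.mulVec (Z ω0) i - (μ[fun ω' => Pc.mulVec (Z ω') i|mY]) ω0)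
            + (1 - Pc).mulVec (Z ω0) i))|mY]) ω := ae_all_iff.2 hstep1
  filter_upwards [hstep1', hsumBQ, hmid] with ω h1 h2 h3
  calc ∑ i, condVarEntry mΩ μ mY Z i i ω
      = ∑ i, (μ[fun ω0 =>
          (((Pc.mulVec (Z ω0) i - (μ[fun ω' => Pc.mulVec (Z ω') i|mY]) ω0)
              + (1 - Pc).mulVec (Z ω0) i)
            * ((Pc.mulVec (Z ω0) i - (μ[fun ω' => Pc.mulVec (Z ω') i|mY]) ω0)
              + (1 - Pc).mulVec (Z ω0) i))|mY]) ω :=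
        Finset.sum_congr rfl fun i _ => h1 i
    _ = (μ[fun ω0 => ∑ i,
          (((Pc.mulVec (Z ω0) i - (μ[fun ω' => Pc.mulVec (Z ω') i|mY]) ω0)
              + (1 - Pc).mulVec (Z ω0) i)
            * ((Pc.mulVec (Z ω0) i - (μ[fun ω' => Pc.mulVec (Z ω') i|mY]) ω0)
              + (1 - Pc).mulVec (Z ω0) i))|mY]) ω := h2.symm
    _ = (μ[fun ω' => ∑ j, ((1 - Pc).mulVec (Z ω') j) ^ 2|mY]) ω
        + ∑ i, (μ[fun ω0 =>
          ((Pc.mulVec (Z ω0) i - (μ[fun ω' => Pc.mulVec (Z ω') i|mY]) ω0)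
            * (Pc.mulVec (Z ω0) i - (μ[fun ω' => Pc.mulVec (Z ω') i|mY]) ω0))|mY]) ω := h3
    _ = (μ[fun ω' => ∑ j, ((1 - Pc).mulVec (Z ω') j) ^ 2|mY]) ω
        + ∑ i, condVarEntry mΩ μ mY (fun ω' => Pc.mulVec (Z ω')) i i ω := by
        congr 1
end
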